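/- For the pair kernel $\Pi_2$ on a countable set $E$, the measures $\delta_a\Pi_2^n$ have first marginal $\delta_a\Pi^n$ and second marginal $\delta_b\Pi^n$ when started from $(a,b)$; consequently, if $\pi$ is invariant for $\Pi$, then for every finite $F\subset E$ and every $n$, $(\delta_{(a,b)}\Pi_2^n)(E^2\setminus F^2)\le \pi(E\setminus F)(1/\pi\{a\}+1/\pi\{b\})$. -/

import Mathlib

open MeasureTheory
open scoped ENNReal

/-- The law at time `n` of the chain `X_{n+1} = f(X_n, V_{n+1})` started at `x`
(iterates of the kernel `Π(x,·) = law (f x V₁)` applied to `δ_x`). -/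
noncomputable def chainIter {E G : Type*} [MeasurableSpace E] [MeasurableSpace G]
    (f : E → G → E) (β : Measure G) (x : E) : ℕ → Measure E
  | 0 => Measure.dirac x
  | n + 1 => (chainIter f β x n).bind fun y => Measure.map (fun v => f y v) β

/-- The law at time `n` of the pair chain for the kernel
`Π₂((x,y),·) = law (f x V₁, f y V₁)` started at `(a,b)`. -/
noncomputable def pairIter {E G : Type*} [MeasurableSpace E] [MeasurableSpace G]
    (f : E → G → E) (β : Measure G) (p : E × E) : ℕ → Measure (E × E)
  | 0 => Measure.dirac p
  | n + 1 => (pairIter f β p n).bind fun q =>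
      Measure.map (fun v => (f q.1 v, f q.2 v)) β

section aux
variable {E G : Type*} [MeasurableSpace E] [MeasurableSingletonClass E]
    [Countable E] [MeasurableSpace G]

lemma meas_of_countable {α β : Type*} [MeasurableSpace α] [MeasurableSingletonClass α]
    [Countable α] [MeasurableSpace β] (g : α → β) : Measurable g :=
  measurable_of_countable g

/-- invariance iterated -/
lemma pi_bind_chainIter (f : E → G → E) (β : Measure G) (π : Measure E)
    (hπ : π.bind (fun x => Measure.map (fun v => f x v) β) = π) (n : ℕ) :
    π.bind (fun x => chainIter f β x n) = π := by
  induction n with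
  | zero => simp [chainIter, Measure.bind_dirac (m := π)]
  | succ n ih =>
      have : (fun x => chainIter f β x (n+1))
          = fun x => (chainIter f β x n).bind (fun y => Measure.map (fun v => f y v) β) := rfl
      rw [this, ← Measure.bind_bind (meas_of_countable _).aemeasurable (meas_of_countable _).aemeasurable, ih, hπ]

lemma chainIter_le (f : E → G → E) (β : Measure G) (π : Measure E)
    (hπ : π.bind (fun x => Measure.map (fun v => f x v) β) = π) (a : E) (n : ℕ)
    (s : Set E) :
    π {a} * chainIter f β a n s ≤ π s := by
  have hs : MeasurableSet s := (Set.to_countable s).measurableSet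
  have h1 : π s = ∫⁻ x, chainIter f β x n s ∂π := by
    conv_lhs => rw [← pi_bind_chainIter f β π hπ n]
    rw [Measure.bind_apply hs (meas_of_countable _).aemeasurable]
  have h2 : ∫⁻ x in {a}, chainIter f β x n s ∂π ≤ ∫⁻ x, chainIter f β x n s ∂π :=
    setLIntegral_le_lintegral _ _
  rw [lintegral_singleton] at h2
  rw [h1]
  calc π {a} * chainIter f β a n s = chainIter f β a n s * π {a} := mul_comm _ _
    _ ≤ _ := h2

lemma map_bind_countable {α β γ : Type*} [MeasurableSpace α]
    [MeasurableSpace β] [MeasurableSingletonClass β] [Countable β] [MeasurableSpace γ]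
    (μ : Measure α) (κ : α → Measure β) (hκ : Measurable κ) (g : β → γ) (hg : Measurable g) :
    (μ.bind κ).map g = μ.bind (fun x => (κ x).map g) := by
  rw [← Measure.bind_dirac_eq_map _ hg,
    Measure.bind_bind (g := fun x => Measure.dirac (g x)) hκ.aemeasurable
      (Measure.measurable_dirac.comp hg).aemeasurable]
  congr 1
  ext x
  rw [Measure.bind_dirac_eq_map _ hg]

lemma bind_map_countable {α β γ : Type*} [MeasurableSpace α]
    [MeasurableSpace β] [MeasurableSingletonClass β] [Countable β] [MeasurableSpace γ]
    (μ : Measure α) (g : α → β) (hg : Measurable g) (κ : β → Measure γ) (hκ : Measurable κ) :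
    (μ.map g).bind κ = μ.bind (fun x => κ (g x)) := by
  rw [← Measure.bind_dirac_eq_map _ hg,
    Measure.bind_bind (f := fun x => Measure.dirac (g x))
      (Measure.measurable_dirac.comp hg).aemeasurable hκ.aemeasurable]
  congr 1
  ext x
  rw [Measure.dirac_bind hκ]

end aux

/-- the measures `δ_{(a,b)} Π₂ⁿ` have first marginal `δ_a Πⁿ` and second
marginal `δ_b Πⁿ`; consequently, if `π` is invariant for `Π` and charges `a` and `b`,
then for every finite `F ⊆ E` and every `n`,
`(δ_{(a,b)} Π₂ⁿ)(E² \ F²) ≤ π(E \ F) (1/π{a} + 1/π{b})`. -/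
theorem stmt_8 {E G : Type*} [MeasurableSpace E] [MeasurableSingletonClass E]
    [Countable E] [MeasurableSpace G]
    (f : E → G → E) (hf : ∀ x, Measurable (f x))
    (β : Measure G) [IsProbabilityMeasure β]
    (π : Measure E) [IsProbabilityMeasure π]
    (hπ : π.bind (fun x => Measure.map (fun v => f x v) β) = π)
    (a b : E) (ha : 0 < π {a}) (hb : 0 < π {b}) :
    ∀ n : ℕ,
      (pairIter f β (a, b) n).map Prod.fst = chainIter f β a n ∧
      (pairIter f β (a, b) n).map Prod.snd = chainIter f β b n ∧
      ∀ F : Finset E,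
        pairIter f β (a, b) n ((↑(F ×ˢ F) : Set (E × E))ᶜ) ≤
          π (↑F : Set E)ᶜ * ((π {a})⁻¹ + (π {b})⁻¹) := by
  intro n
  have κmeas : Measurable (fun y : E => Measure.map (fun v => f y v) β) :=
    meas_of_countable _
  have κ2meas : Measurable (fun q : E × E => Measure.map (fun v => (f q.1 v, f q.2 v)) β) :=
    meas_of_countable _
  have hfst : (pairIter f β (a, b) n).map Prod.fst = chainIter f β a n := by
    clear hπ
    induction n with
    | zero => simp [pairIter, chainIter, Measure.map_dirac' measurable_fst]
    | succ n ih =>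
        show ((pairIter f β (a,b) n).bind _).map Prod.fst = (chainIter f β a n).bind _
        rw [map_bind_countable _ _ κ2meas _ measurable_fst, ← ih,
          bind_map_countable _ _ measurable_fst _ κmeas]
        congr 1
        ext q
        rw [Measure.map_map measurable_fst ((hf q.1).prodMk (hf q.2))]
        rfl
  have hsnd : (pairIter f β (a, b) n).map Prod.snd = chainIter f β b n := by
    clear hπ hfst
    induction n with
    | zero => simp [pairIter, chainIter, Measure.map_dirac' measurable_snd]
    | succ n ih =>
        show ((pairIter f β (a,b) n).bind _).map Prod.snd = (chainIter f β b n).bind _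
        rw [map_bind_countable _ _ κ2meas _ measurable_snd, ← ih,
          bind_map_countable _ _ measurable_snd _ κmeas]
        congr 1
        ext q
        rw [Measure.map_map measurable_snd ((hf q.1).prodMk (hf q.2))]
        rfl
  refine ⟨hfst, hsnd, fun F => ?_⟩
  set μ := pairIter f β (a, b) n
  have hsub : ((↑(F ×ˢ F) : Set (E × E)))ᶜ ⊆
      (Prod.fst ⁻¹' ((↑F : Set E)ᶜ)) ∪ (Prod.snd ⁻¹' ((↑F : Set E)ᶜ)) := by
    intro q hq
    by_contra h
    simp only [Set.mem_union, Set.mem_preimage, Set.mem_compl_iff, not_or, not_not] at h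
    exact hq (by simp [Finset.mem_coe, Finset.mem_product, h.1, h.2])
  have hFc : MeasurableSet ((↑F : Set E)ᶜ) := ((Set.to_countable _).measurableSet).compl
  have h1 : μ (Prod.fst ⁻¹' ((↑F : Set E)ᶜ)) = chainIter f β a n ((↑F : Set E)ᶜ) := by
    rw [← hfst, Measure.map_apply measurable_fst hFc]
  have h2 : μ (Prod.snd ⁻¹' ((↑F : Set E)ᶜ)) = chainIter f β b n ((↑F : Set E)ᶜ) := by
    rw [← hsnd, Measure.map_apply measurable_snd hFc]
  have hA : chainIter f β a n ((↑F : Set E)ᶜ) ≤ π ((↑F : Set E)ᶜ) * (π {a})⁻¹ := by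
    have h := chainIter_le f β π hπ a n ((↑F : Set E)ᶜ)
    calc chainIter f β a n ((↑F : Set E)ᶜ)
        ≤ (π {a})⁻¹ * π ((↑F : Set E)ᶜ) := by
          rw [← ENNReal.div_eq_inv_mul, ENNReal.le_div_iff_mul_le (Or.inl ha.ne')
            (Or.inl (measure_ne_top π _)), mul_comm]
          exact h
      _ = _ := mul_comm _ _
  have hB : chainIter f β b n ((↑F : Set E)ᶜ) ≤ π ((↑F : Set E)ᶜ) * (π {b})⁻¹ := by
    have h := chainIter_le f β π hπ b n ((↑F : Set E)ᶜ)
    calc chainIter f β b n ((↑F : Set E)ᶜ)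
        ≤ (π {b})⁻¹ * π ((↑F : Set E)ᶜ) := by
          rw [← ENNReal.div_eq_inv_mul, ENNReal.le_div_iff_mul_le (Or.inl hb.ne')
            (Or.inl (measure_ne_top π _)), mul_comm]
          exact h
      _ = _ := mul_comm _ _
  calc μ ((↑(F ×ˢ F) : Set (E × E)))ᶜ
      ≤ μ ((Prod.fst ⁻¹' ((↑F : Set E)ᶜ)) ∪ (Prod.snd ⁻¹' ((↑F : Set E)ᶜ))) :=
        measure_mono hsub
    _ ≤ μ (Prod.fst ⁻¹' ((↑F : Set E)ᶜ)) + μ (Prod.snd ⁻¹' ((↑F : Set E)ᶜ)) :=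
        measure_union_le _ _
    _ = chainIter f β a n ((↑F : Set E)ᶜ) + chainIter f β b n ((↑F : Set E)ᶜ) := by
        rw [h1, h2]
    _ ≤ π ((↑F : Set E)ᶜ) * (π {a})⁻¹ + π ((↑F : Set E)ᶜ) * (π {b})⁻¹ := add_le_add hA hB
    _ = π ((↑F : Set E)ᶜ) * ((π {a})⁻¹ + (π {b})⁻¹) := (mul_add _ _ _).symm
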